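/- Let n ≥ 2 and let Θ = (α, β, γ) be a non-trivial autotopism of a Latin square of order n such that two of the three permutations α, β, γ each have at least one fixed point. Then all three permutations have the same cycle structure, each has between 1 and ⌊n/2⌋ fixed points, and the common number of cycles k satisfies 2 ≤ k ≤ ⌊n/2⌋ + ⌊⌈n/2⌉/2⌋. -/

import Mathlib

open Classical

/-- Number of cycles of length `r` in the disjoint cycle decomposition of `δ`
(fixed points count as cycles of length 1). -/
noncomputable def cyclesOfLen {n : ℕ} (δ : Equiv.Perm (Fin n)) (r : ℕ) : ℕ :=
  (Finset.univ.filter fun x : Fin n => Function.minimalPeriod (⇑δ) x = r).card / r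

/-- `L` is (the table of) a Latin square of order `n`. -/
def IsLatinSquare {n : ℕ} (L : Fin n → Fin n → Fin n) : Prop :=
  (∀ i, Function.Bijective (L i)) ∧ ∀ j, Function.Bijective fun i => L i j

/-- `(α, β, γ)` is an autotopism of `L`: `(i,j,k) ∈ L → (α i, β j, γ k) ∈ L`. -/
def IsAutotopism {n : ℕ} (L : Fin n → Fin n → Fin n)
    (α β γ : Equiv.Perm (Fin n)) : Prop :=
  ∀ i j, L (α i) (β j) = γ (L i j)

open Finset Function Equiv

private lemma perm_periodic {n : ℕ} (δ : Equiv.Perm (Fin n)) (x : Fin n) :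
    x ∈ Function.periodicPts ⇑δ := by
  refine ⟨orderOf δ, orderOf_pos δ, ?_⟩
  show (⇑δ)^[orderOf δ] x = x
  rw [Equiv.Perm.iterate_eq_pow, pow_orderOf_eq_one]
  rfl

private lemma minP_pos {n : ℕ} (δ : Equiv.Perm (Fin n)) (x : Fin n) :
    0 < Function.minimalPeriod ⇑δ x :=
  Function.minimalPeriod_pos_of_mem_periodicPts (perm_periodic δ x)

private lemma isPeriodic_conj_iff {n : ℕ} (ρ δ : Equiv.Perm (Fin n)) (x : Fin n) (m : ℕ) :
    Function.IsPeriodicPt ⇑(ρ * δ * ρ⁻¹) m (ρ x) ↔ Function.IsPeriodicPt ⇑δ m x := by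
  have hpow : (ρ * δ * ρ⁻¹) ^ m = ρ * δ ^ m * ρ⁻¹ := by
    rw [conj_pow]
  unfold Function.IsPeriodicPt Function.IsFixedPt
  rw [Equiv.Perm.iterate_eq_pow, Equiv.Perm.iterate_eq_pow, hpow]
  simp [Equiv.Perm.mul_apply]

private lemma minP_conj {n : ℕ} (ρ δ : Equiv.Perm (Fin n)) (x : Fin n) :
    Function.minimalPeriod ⇑(ρ * δ * ρ⁻¹) (ρ x) = Function.minimalPeriod ⇑δ x := by
  apply le_antisymm
  · exact Function.IsPeriodicPt.minimalPeriod_le (minP_pos δ x)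
      ((isPeriodic_conj_iff ρ δ x _).2 (Function.isPeriodicPt_minimalPeriod _ _))
  · exact Function.IsPeriodicPt.minimalPeriod_le (minP_pos _ (ρ x))
      ((isPeriodic_conj_iff ρ δ x _).1 (Function.isPeriodicPt_minimalPeriod _ _))

private lemma cyclesOfLen_conj {n : ℕ} (ρ δ : Equiv.Perm (Fin n)) (r : ℕ) :
    cyclesOfLen (ρ * δ * ρ⁻¹) r = cyclesOfLen δ r := by
  unfold cyclesOfLen
  congr 1
  have h : (Finset.univ.filter fun x : Fin n =>
        Function.minimalPeriod (⇑(ρ * δ * ρ⁻¹)) x = r) =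
      (Finset.univ.filter fun x : Fin n =>
        Function.minimalPeriod (⇑δ) x = r).map ρ.toEmbedding := by
    ext y
    simp only [mem_filter, mem_map, mem_univ, true_and, Equiv.coe_toEmbedding]
    constructor
    · intro h
      refine ⟨ρ⁻¹ y, ?_, (Equiv.apply_symm_apply ρ y : ρ (ρ⁻¹ y) = y)⟩
      rw [← minP_conj ρ δ (ρ⁻¹ y), show ρ (ρ⁻¹ y) = y from Equiv.apply_symm_apply ρ y]
      exact h
    · rintro ⟨x, hx, rfl⟩
      rw [minP_conj]
      exact hx
  rw [h, Finset.card_map]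

private lemma cyclesOfLen_one {n : ℕ} (δ : Equiv.Perm (Fin n)) :
    cyclesOfLen δ 1 = (Finset.univ.filter fun x => δ x = x).card := by
  unfold cyclesOfLen
  rw [Nat.div_one]
  congr 1
  ext x
  simp [Function.minimalPeriod_eq_one_iff_isFixedPt, Function.IsFixedPt]

private lemma minP_le_fiber {n : ℕ} (δ : Equiv.Perm (Fin n)) (x : Fin n) :
    Function.minimalPeriod ⇑δ x ≤
      (Finset.univ.filter fun y =>
        Function.minimalPeriod ⇑δ y = Function.minimalPeriod ⇑δ x).card := by
  set r := Function.minimalPeriod ⇑δ x with hr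
  have hinj : Set.InjOn (fun m => (δ ^ m) x) ((Finset.range r : Finset ℕ) : Set ℕ) := by
    rw [Finset.coe_range]
    exact Function.iterate_injOn_Iio_minimalPeriod
  have hsub : (Finset.range r).image (fun m => (δ ^ m) x) ⊆
      Finset.univ.filter fun y => Function.minimalPeriod ⇑δ y = r := by
    intro y hy
    simp only [Finset.mem_image, Finset.mem_range] at hy
    obtain ⟨m, _, rfl⟩ := hy
    simp only [mem_filter, mem_univ, true_and]
    have hc : δ ^ m * δ * (δ ^ m)⁻¹ = δ := by
      rw [(Commute.pow_self δ m).eq, mul_assoc, mul_inv_cancel, mul_one]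
    calc Function.minimalPeriod ⇑δ ((δ ^ m) x)
        = Function.minimalPeriod ⇑(δ ^ m * δ * (δ ^ m)⁻¹) ((δ ^ m) x) := by rw [hc]
      _ = r := by rw [minP_conj]
  calc r = ((Finset.range r).image (fun m => (δ ^ m) x)).card := by
        rw [Finset.card_image_of_injOn hinj, Finset.card_range]
    _ ≤ _ := Finset.card_le_card hsub

private lemma minP_le_n {n : ℕ} (δ : Equiv.Perm (Fin n)) (x : Fin n) :
    Function.minimalPeriod ⇑δ x ≤ n :=
  (minP_le_fiber δ x).trans ((Finset.card_filter_le _ _).trans (by simp))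

private lemma sum_fibers {n : ℕ} (δ : Equiv.Perm (Fin n)) :
    ∑ r ∈ Finset.Icc 1 n,
      (Finset.univ.filter fun x => Function.minimalPeriod ⇑δ x = r).card = n := by
  have := Finset.card_eq_sum_card_fiberwise
    (f := fun x : Fin n => Function.minimalPeriod ⇑δ x)
    (s := Finset.univ) (t := Finset.Icc 1 n)
    (fun x _ => Finset.mem_Icc.2 ⟨minP_pos δ x, minP_le_n δ x⟩)
  simpa using this.symm

private lemma sum_div_le {n : ℕ} (c : ℕ → ℕ) (htot : ∑ r ∈ Finset.Icc 1 n, c r = n) :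
    ∑ r ∈ Finset.Icc 1 n, c r / r ≤ c 1 + (n - c 1) / 2 := by
  rcases Nat.eq_zero_or_pos n with hn | hn
  · subst hn; simp
  have hins : Finset.Icc 1 n = insert 1 (Finset.Icc 2 n) := by
    ext m; simp only [Finset.mem_Icc, Finset.mem_insert]; omega
  have h1 : ∑ r ∈ Finset.Icc 1 n, c r / r = c 1 + ∑ r ∈ Finset.Icc 2 n, c r / r := by
    rw [hins, Finset.sum_insert (by simp), Nat.div_one]
  have h2 : ∑ r ∈ Finset.Icc 2 n, c r = n - c 1 := by
    rw [hins, Finset.sum_insert (by simp)] at htot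
    omega
  have h3 : (∑ r ∈ Finset.Icc 2 n, c r / r) * 2 ≤ ∑ r ∈ Finset.Icc 2 n, c r := by
    rw [Finset.sum_mul]
    apply Finset.sum_le_sum
    intro r hr
    have hr2 : 2 ≤ r := (Finset.mem_Icc.1 hr).1
    calc c r / r * 2 ≤ c r / r * r := Nat.mul_le_mul_left _ hr2
      _ ≤ c r := Nat.div_mul_le_self _ _
  have h4 : ∑ r ∈ Finset.Icc 2 n, c r / r ≤ (n - c 1) / 2 := by
    rw [Nat.le_div_iff_mul_le (by norm_num)]
    omega
  omega

private lemma sum_cycles_le {n : ℕ} (δ : Equiv.Perm (Fin n)) :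
    ∑ r ∈ Finset.Icc 1 n, cyclesOfLen δ r ≤
      cyclesOfLen δ 1 + (n - cyclesOfLen δ 1) / 2 := by
  have h := sum_div_le
    (fun r => (Finset.univ.filter fun x : Fin n =>
      Function.minimalPeriod (⇑δ) x = r).card) (sum_fibers δ)
  have h1 : cyclesOfLen δ 1 = (Finset.univ.filter fun x : Fin n =>
      Function.minimalPeriod (⇑δ) x = 1).card := by
    unfold cyclesOfLen; rw [Nat.div_one]
  rw [h1]
  exact h

theorem stmt7 {n : ℕ} (hn : 2 ≤ n) (L : Fin n → Fin n → Fin n)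
    (α β γ : Equiv.Perm (Fin n))
    (hL : IsLatinSquare L) (hA : IsAutotopism L α β γ)
    (hnt : ¬(α = 1 ∧ β = 1 ∧ γ = 1))
    (hfix : ((∃ x, α x = x) ∧ ∃ x, β x = x) ∨ ((∃ x, α x = x) ∧ ∃ x, γ x = x) ∨
      ((∃ x, β x = x) ∧ ∃ x, γ x = x)) :
    α.cycleType = β.cycleType ∧ β.cycleType = γ.cycleType ∧
    (∀ δ ∈ [α, β, γ], 1 ≤ cyclesOfLen δ 1 ∧ cyclesOfLen δ 1 ≤ n / 2) ∧
    ∃ k, (∀ δ ∈ [α, β, γ], ∑ r ∈ Finset.Icc 1 n, cyclesOfLen δ r = k) ∧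
      2 ≤ k ∧ k ≤ n / 2 + (n + 1) / 2 / 2 := by
  obtain ⟨hrow, hcol⟩ := hL
  -- Step 1: both α and β have fixed points
  have hij : (∃ i, α i = i) ∧ (∃ j, β j = j) := by
    rcases hfix with ⟨ha, hb⟩ | ⟨⟨i, hi⟩, ⟨k, hk⟩⟩ | ⟨⟨j, hj⟩, ⟨k, hk⟩⟩
    · exact ⟨ha, hb⟩
    · obtain ⟨j, hjk⟩ := (hrow i).2 k
      refine ⟨⟨i, hi⟩, ⟨j, ?_⟩⟩
      have h1 := hA i j
      rw [hi, hjk, hk, ← hjk] at h1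
      exact (hrow i).1 h1
    · obtain ⟨i, hik⟩ := (hcol j).2 k
      refine ⟨⟨i, ?_⟩, ⟨j, hj⟩⟩
      have h1 := hA i j
      simp only at hik
      rw [hj, hik, hk, ← hik] at h1
      exact (hcol j).1 h1
  obtain ⟨⟨i0, hi0⟩, ⟨j0, hj0⟩⟩ := hij
  set ρ : Equiv.Perm (Fin n) := Equiv.ofBijective (L i0) (hrow i0) with hρ
  set τ : Equiv.Perm (Fin n) := Equiv.ofBijective (fun i => L i j0) (hcol j0) with hτ
  have hρapp : ∀ y, ρ y = L i0 y := fun y => rfl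
  have hτapp : ∀ y, τ y = L y j0 := fun y => rfl
  have hργ : ρ * β * ρ⁻¹ = γ := by
    apply Equiv.ext
    intro k
    show ρ (β (ρ⁻¹ k)) = γ k
    have h1 := hA i0 (ρ⁻¹ k)
    rw [hi0] at h1
    have h2 : L i0 (ρ⁻¹ k) = k := by
      rw [← hρapp]; exact Equiv.apply_symm_apply ρ k
    rw [hρapp, h1, h2]
  have hτγ : τ * α * τ⁻¹ = γ := by
    apply Equiv.ext
    intro k
    show τ (α (τ⁻¹ k)) = γ k
    have h1 := hA (τ⁻¹ k) j0
    rw [hj0] at h1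
    have h2 : L (τ⁻¹ k) j0 = k := by
      rw [← hτapp]; exact Equiv.apply_symm_apply τ k
    rw [hτapp, h1, h2]
  -- cycle types
  have hct1 : γ.cycleType = β.cycleType := by rw [← hργ]; exact Equiv.Perm.cycleType_conj
  have hct2 : γ.cycleType = α.cycleType := by rw [← hτγ]; exact Equiv.Perm.cycleType_conj
  -- cyclesOfLen equalities
  have hγβ : ∀ r, cyclesOfLen γ r = cyclesOfLen β r := by
    intro r; rw [← hργ]; exact cyclesOfLen_conj ρ β r
  have hγα : ∀ r, cyclesOfLen γ r = cyclesOfLen α r := by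
    intro r; rw [← hτγ]; exact cyclesOfLen_conj τ α r
  have hαβ : ∀ r, cyclesOfLen α r = cyclesOfLen β r := fun r => (hγα r).symm.trans (hγβ r)
  -- β is nontrivial
  have hβ1 : β ≠ 1 := by
    intro h
    apply hnt
    have hb0 : β.cycleType = 0 := by rw [h]; exact Equiv.Perm.cycleType_one
    refine ⟨?_, h, ?_⟩
    · exact Equiv.Perm.cycleType_eq_zero.1 (by rw [← hct2, hct1, hb0])
    · exact Equiv.Perm.cycleType_eq_zero.1 (by rw [hct1, hb0])
  obtain ⟨j1, hj1⟩ : ∃ j, β j ≠ j := by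
    by_contra h
    push_neg at h
    exact hβ1 (Equiv.ext h)
  -- fixed point counts
  set f : ℕ := cyclesOfLen β 1 with hf
  have hfα : cyclesOfLen α 1 = f := hαβ 1
  have hfγ : cyclesOfLen γ 1 = f := hγβ 1
  have hf1 : 1 ≤ f := by
    rw [hf, cyclesOfLen_one]
    refine Finset.card_pos.2 ⟨j0, ?_⟩
    simp [hj0]
  -- f ≤ n/2 via the map i ↦ L i j1 from fixed points of α to non-fixed points of γ
  have hmaps : ∀ i ∈ Finset.univ.filter (fun x => α x = x),
      L i j1 ∈ Finset.univ.filter (fun x => ¬ γ x = x) := by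
    intro i hi
    simp only [mem_filter, mem_univ, true_and] at hi ⊢
    intro hgfix
    apply hj1
    have h1 := hA i j1
    rw [hi, hgfix] at h1
    exact (hrow i).1 h1
  have hinj : Set.InjOn (fun i => L i j1)
      ((Finset.univ.filter (fun x : Fin n => α x = x)) : Set (Fin n)) :=
    ((hcol j1).1).injOn
  have hcard1 : (Finset.univ.filter (fun x : Fin n => α x = x)).card ≤
      (Finset.univ.filter (fun x : Fin n => ¬ γ x = x)).card :=
    Finset.card_le_card_of_injOn _ hmaps hinj
  have hcomp : (Finset.univ.filter (fun x : Fin n => γ x = x)).card +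
      (Finset.univ.filter (fun x : Fin n => ¬ γ x = x)).card = n := by
    rw [Finset.card_filter_add_card_filter_not]
    simp
  have hcα : (Finset.univ.filter (fun x : Fin n => α x = x)).card = f := by
    rw [← cyclesOfLen_one]; exact hfα
  have hcγ : (Finset.univ.filter (fun x : Fin n => γ x = x)).card = f := by
    rw [← cyclesOfLen_one]; exact hfγ
  have hf2 : f ≤ n / 2 := by omega
  -- the common number of cycles
  set k : ℕ := ∑ r ∈ Finset.Icc 1 n, cyclesOfLen β r with hk
  have hkα : ∑ r ∈ Finset.Icc 1 n, cyclesOfLen α r = k :=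
    Finset.sum_congr rfl (fun r _ => hαβ r)
  have hkγ : ∑ r ∈ Finset.Icc 1 n, cyclesOfLen γ r = k :=
    Finset.sum_congr rfl (fun r _ => hγβ r)
  -- lower bound : 2 ≤ k
  have hk2 : 2 ≤ k := by
    set r1 : ℕ := Function.minimalPeriod ⇑β j1 with hr1
    have hr1pos : 0 < r1 := minP_pos β j1
    have hr1ne1 : r1 ≠ 1 := by
      intro h
      exact hj1 (Function.minimalPeriod_eq_one_iff_isFixedPt.1 h)
    have hr1n : r1 ≤ n := minP_le_n β j1
    have hterm : 1 ≤ cyclesOfLen β r1 := by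
      unfold cyclesOfLen
      rw [Nat.one_le_div_iff hr1pos]
      exact minP_le_fiber β j1
    have hsub : ({1, r1} : Finset ℕ) ⊆ Finset.Icc 1 n := by
      intro m hm
      simp only [Finset.mem_insert, Finset.mem_singleton] at hm
      rcases hm with rfl | rfl
      · exact Finset.mem_Icc.2 ⟨le_refl _, by omega⟩
      · exact Finset.mem_Icc.2 ⟨hr1pos, hr1n⟩
    have hpair : ∑ r ∈ ({1, r1} : Finset ℕ), cyclesOfLen β r =
        cyclesOfLen β 1 + cyclesOfLen β r1 :=
      Finset.sum_pair (fun h => hr1ne1 h.symm)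
    have hle : ∑ r ∈ ({1, r1} : Finset ℕ), cyclesOfLen β r ≤ k :=
      Finset.sum_le_sum_of_subset hsub
    omega
  -- upper bound
  have hkle : k ≤ f + (n - f) / 2 := sum_cycles_le β
  refine ⟨hct2.symm.trans hct1, hct1.symm, ?_, k, ?_, hk2, by omega⟩
  · intro δ hδ
    simp only [List.mem_cons, List.not_mem_nil, or_false] at hδ
    rcases hδ with rfl | rfl | rfl
    · rw [hfα]; exact ⟨hf1, hf2⟩
    · exact ⟨hf1, hf2⟩
    · rw [hfγ]; exact ⟨hf1, hf2⟩
  · intro δ hδ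
    simp only [List.mem_cons, List.not_mem_nil, or_false] at hδ
    rcases hδ with rfl | rfl | rfl
    · exact hkα
    · rfl
    · exact hkγ
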